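/- arXiv:2212.06553 — 3 statements merged into one kernel-verified Lean document; each statement's English description precedes it below -/
import Mathlib

section
/- Let k be a real number and let P(u,v,w) = k − u − u^{-1} − v − v^{-1} − w − w^{-1} be the Newton polynomial of ℙ¹×ℙ¹×ℙ¹. For (x,y,z) ∈ ℝ³: (i) if 2·cosh x + 2·cosh y + 2·cosh z < |k| then (x,y,z) does not belong to the amoeba of P; (ii) if k ≠ 0 and 2·cosh x + 2·cosh y + 2·cosh z = |k| then (x,y,z) belongs to the amoeba of P. Consequently, for |k| > 6 the set {(x,y,z) : 2·cosh x + 2·cosh y + 2·cosh z < |k|} is a nonempty bounded complement component (3-dimensional cavity) of the amoeba, bounded by the surfaces x = ln| |k|/2 − cosh y − cosh z ± √((|k|/2 − cosh y − cosh z)² − 1) |. -/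
/-- The amoeba of the `ℙ¹×ℙ¹×ℙ¹` Newton polynomial
`P(u,v,w) = k - u - u⁻¹ - v - v⁻¹ - w - w⁻¹`. -/
def amoebaP1P1P1 (k : ℝ) : Set (ℝ × ℝ × ℝ) :=
  {p | ∃ u v w : ℂ, u ≠ 0 ∧ v ≠ 0 ∧ w ≠ 0 ∧
    (k : ℂ) - u - u⁻¹ - v - v⁻¹ - w - w⁻¹ = 0 ∧
    Real.log ‖u‖ = p.1 ∧ Real.log ‖v‖ = p.2.1 ∧
    Real.log ‖w‖ = p.2.2}

/-- The candidate cavity `{(x,y,z) : 2 cosh x + 2 cosh y + 2 cosh z < |k|}`. -/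
def holeP1P1P1 (k : ℝ) : Set (ℝ × ℝ × ℝ) :=
  {p | 2 * Real.cosh p.1 + 2 * Real.cosh p.2.1 + 2 * Real.cosh p.2.2 < |k|}

noncomputable def fP (p : ℝ × ℝ × ℝ) : ℝ :=
  2 * Real.cosh p.1 + 2 * Real.cosh p.2.1 + 2 * Real.cosh p.2.2

lemma coshConvex : ConvexOn ℝ Set.univ Real.cosh := by
  refine ⟨convex_univ, fun x _ y _ a b ha hb hab => ?_⟩
  have h1 := convexOn_exp.2 (Set.mem_univ x) (Set.mem_univ y) ha hb hab
  have h2 := convexOn_exp.2 (Set.mem_univ (-x)) (Set.mem_univ (-y)) ha hb hab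
  simp only [smul_eq_mul] at h1 h2 ⊢
  rw [Real.cosh_eq, Real.cosh_eq, Real.cosh_eq]
  have hx : -(a * x + b * y) = a * (-x) + b * (-y) := by ring
  rw [hx]
  linarith

lemma fPConvex : ConvexOn ℝ Set.univ fP := by
  refine ⟨convex_univ, fun p _ q _ a b ha hb hab => ?_⟩
  have h1 := coshConvex.2 (Set.mem_univ p.1) (Set.mem_univ q.1) ha hb hab
  have h2 := coshConvex.2 (Set.mem_univ p.2.1) (Set.mem_univ q.2.1) ha hb hab
  have h3 := coshConvex.2 (Set.mem_univ p.2.2) (Set.mem_univ q.2.2) ha hb hab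
  simp only [smul_eq_mul, fP, Prod.fst_add, Prod.snd_add, Prod.smul_fst, Prod.smul_snd,
    smul_eq_mul] at h1 h2 h3 ⊢
  linarith

lemma fPcont : Continuous fP := by unfold fP; fun_prop

lemma abs_lt_two_mul_cosh (t : ℝ) : |t| < 2 * Real.cosh t := by
  have h1 : |t| < Real.exp |t| := lt_of_lt_of_le (lt_add_one _) (by linarith [Real.add_one_le_exp |t|])
  have h2 : Real.exp |t| ≤ 2 * Real.cosh t := by
    rw [← Real.cosh_abs, Real.cosh_eq]
    have := (Real.exp_pos (-|t|)).le
    linarith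
  linarith


lemma part1 (k : ℝ) (x y z : ℝ)
    (h : 2 * Real.cosh x + 2 * Real.cosh y + 2 * Real.cosh z < |k|) :
    (x, y, z) ∉ amoebaP1P1P1 k := by
  rintro ⟨u, v, w, hu, hv, hw, heq, hx, hy, hz⟩
  have hx' : Real.log ‖u‖ = x := hx
  have hy' : Real.log ‖v‖ = y := hy
  have hz' : Real.log ‖w‖ = z := hz
  have hux : ‖u‖ = Real.exp x := by
    rw [← hx', Real.exp_log (norm_pos_iff.mpr hu)]
  have hvy : ‖v‖ = Real.exp y := by
    rw [← hy', Real.exp_log (norm_pos_iff.mpr hv)]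
  have hwz : ‖w‖ = Real.exp z := by
    rw [← hz', Real.exp_log (norm_pos_iff.mpr hw)]
  have hk : (k : ℂ) = u + u⁻¹ + v + v⁻¹ + w + w⁻¹ := by linear_combination heq
  have h1 := norm_add_le (u + u⁻¹ + v + v⁻¹ + w) w⁻¹
  have h2 := norm_add_le (u + u⁻¹ + v + v⁻¹) w
  have h3 := norm_add_le (u + u⁻¹ + v) v⁻¹
  have h4 := norm_add_le (u + u⁻¹) v
  have h5 := norm_add_le u u⁻¹
  have habsk : ‖(k : ℂ)‖ = |k| := by rw [Complex.norm_real, Real.norm_eq_abs]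
  rw [hk] at habsk
  have hiu : ‖u⁻¹‖ = Real.exp (-x) := by rw [norm_inv, hux, Real.exp_neg]
  have hiv : ‖v⁻¹‖ = Real.exp (-y) := by rw [norm_inv, hvy, Real.exp_neg]
  have hiw : ‖w⁻¹‖ = Real.exp (-z) := by rw [norm_inv, hwz, Real.exp_neg]
  simp only [hux, hiu, hvy, hiv, hwz, hiw] at h1 h2 h3 h4 h5
  rw [Real.cosh_eq, Real.cosh_eq, Real.cosh_eq] at h
  linarith

lemma part2 (k : ℝ) (hk : k ≠ 0) (x y z : ℝ)
    (h : 2 * Real.cosh x + 2 * Real.cosh y + 2 * Real.cosh z = |k|) :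
    (x, y, z) ∈ amoebaP1P1P1 k := by
  set s : ℝ := if 0 ≤ k then 1 else -1 with hs_def
  have hs1 : s = 1 ∨ s = -1 := by unfold s; split_ifs <;> simp
  have hss : s * s = 1 := by rcases hs1 with h' | h' <;> rw [h'] <;> norm_num
  have hsk : s * |k| = k := by
    unfold s; split_ifs with h'
    · rw [one_mul, abs_of_nonneg h']
    · rw [neg_one_mul, abs_of_neg (lt_of_not_ge h'), neg_neg]
  have habs_s : |s| = 1 := by rcases hs1 with h' | h' <;> rw [h'] <;> norm_num
  have hs0 : s ≠ 0 := by rcases hs1 with h' | h' <;> rw [h'] <;> norm_num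
  refine ⟨((s * Real.exp x : ℝ) : ℂ), ((s * Real.exp y : ℝ) : ℂ), ((s * Real.exp z : ℝ) : ℂ),
    ?_, ?_, ?_, ?_, ?_, ?_, ?_⟩
  · exact Complex.ofReal_ne_zero.mpr (mul_ne_zero hs0 (Real.exp_ne_zero x))
  · exact Complex.ofReal_ne_zero.mpr (mul_ne_zero hs0 (Real.exp_ne_zero y))
  · exact Complex.ofReal_ne_zero.mpr (mul_ne_zero hs0 (Real.exp_ne_zero z))
  · have hinv : ∀ t : ℝ, ((s * Real.exp t : ℝ) : ℂ)⁻¹ = ((s * Real.exp (-t) : ℝ) : ℂ) := by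
      intro t
      have hr : (s * Real.exp t) * (s * Real.exp (-t)) = 1 := by
        rw [Real.exp_neg, mul_mul_mul_comm, hss, one_mul,
          mul_inv_cancel₀ (Real.exp_ne_zero t)]
      exact inv_eq_of_mul_eq_one_right (by exact_mod_cast congrArg (fun r : ℝ => (r : ℂ)) hr)
    rw [hinv, hinv, hinv]
    have hcx := Real.cosh_eq x
    have hcy := Real.cosh_eq y
    have hcz := Real.cosh_eq z
    have hreal : k - s * Real.exp x - s * Real.exp (-x) - s * Real.exp y - s * Real.exp (-y)
        - s * Real.exp z - s * Real.exp (-z) = 0 := by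
      linear_combination (-s) * h + (2 * s) * hcx + (2 * s) * hcy + (2 * s) * hcz + (-1) * hsk
    exact_mod_cast congrArg (fun r : ℝ => (r : ℂ)) hreal
  · rw [Complex.norm_real, Real.norm_eq_abs, abs_mul, habs_s, one_mul, abs_of_pos (Real.exp_pos x), Real.log_exp]
  · rw [Complex.norm_real, Real.norm_eq_abs, abs_mul, habs_s, one_mul, abs_of_pos (Real.exp_pos y), Real.log_exp]
  · rw [Complex.norm_real, Real.norm_eq_abs, abs_mul, habs_s, one_mul, abs_of_pos (Real.exp_pos z), Real.log_exp]


lemma hole_eq (k : ℝ) : holeP1P1P1 k = {p | fP p < |k|} := rfl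

lemma hole_open (k : ℝ) : IsOpen (holeP1P1P1 k) := by
  rw [hole_eq]; exact isOpen_lt fPcont continuous_const

lemma hole_convex (k : ℝ) : Convex ℝ (holeP1P1P1 k) := by
  have h := fPConvex.convex_lt |k|
  have he : {x ∈ Set.univ | fP x < |k|} = holeP1P1P1 k := by
    ext p; simp [hole_eq]
  rwa [he] at h

lemma hole_bounded (k : ℝ) : Bornology.IsBounded (holeP1P1P1 k) := by
  have hsub : holeP1P1P1 k ⊆ Metric.ball (0 : ℝ × ℝ × ℝ) |k| := ?_
  · exact (Metric.isBounded_ball (x := (0 : ℝ × ℝ × ℝ)) (r := |k|)).subset hsub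
  intro p hp
  have hp' : 2 * Real.cosh p.1 + 2 * Real.cosh p.2.1 + 2 * Real.cosh p.2.2 < |k| := hp
  have c1 := Real.one_le_cosh p.1
  have c2 := Real.one_le_cosh p.2.1
  have c3 := Real.one_le_cosh p.2.2
  have e1 : |p.1| < |k| := lt_trans (abs_lt_two_mul_cosh p.1) (by linarith)
  have e2 : |p.2.1| < |k| := lt_trans (abs_lt_two_mul_cosh p.2.1) (by linarith)
  have e3 : |p.2.2| < |k| := lt_trans (abs_lt_two_mul_cosh p.2.2) (by linarith)
  rw [Metric.mem_ball, dist_zero_right, Prod.norm_def, Prod.norm_def, Real.norm_eq_abs,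
    Real.norm_eq_abs, Real.norm_eq_abs]
  exact max_lt e1 (max_lt e2 e3)

lemma mem_closure_hole (k : ℝ) (hk6 : 6 < |k|) (p : ℝ × ℝ × ℝ) (hp : fP p = |k|) :
    p ∈ closure (holeP1P1P1 k) := by
  have ht : Filter.Tendsto (fun t : ℝ => t • p) (nhdsWithin 1 (Set.Iio 1)) (nhds p) := by
    have h0 : Filter.Tendsto (fun t : ℝ => t • p) (nhds 1) (nhds p) := by
      simpa using (Continuous.tendsto (f := fun t : ℝ => t • p) (by fun_prop) 1)
    exact h0.mono_left nhdsWithin_le_nhds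
  refine mem_closure_of_tendsto ht ?_
  filter_upwards [Ioo_mem_nhdsLT_of_mem (show (1:ℝ) ∈ Set.Ioc 0 1 by constructor <;> norm_num)]
    with t htt
  obtain ⟨ht0, ht1⟩ := htt
  have hconv := fPConvex.2 (Set.mem_univ (0 : ℝ × ℝ × ℝ)) (Set.mem_univ p)
    (show (0:ℝ) ≤ 1 - t by linarith) ht0.le (by ring)
  rw [smul_zero, zero_add] at hconv
  have hf0 : fP 0 = 6 := by simp [fP, Real.cosh_zero]; norm_num
  rw [hf0, hp] at hconv
  show fP (t • p) < |k|
  calc fP (t • p) ≤ (1 - t) * 6 + t * |k| := by simpa using hconv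
    _ < (1 - t) * |k| + t * |k| := by nlinarith
    _ = |k| := by ring

lemma hole_frontier (k : ℝ) (hk6 : 6 < |k|) :
    frontier (holeP1P1P1 k) = {p : ℝ × ℝ × ℝ | fP p = |k|} := by
  ext p
  constructor
  · rintro ⟨h1, h2⟩
    rw [(hole_open k).interior_eq] at h2
    have h3 : fP p ≤ |k| := by
      have hcl : closure (holeP1P1P1 k) ⊆ {q | fP q ≤ |k|} :=
        closure_minimal (fun q hq => show fP q ≤ |k| from le_of_lt hq) (isClosed_le fPcont continuous_const)
      exact hcl h1
    have h4 : ¬ fP p < |k| := h2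
    exact le_antisymm h3 (not_lt.1 h4)
  · intro hp
    refine ⟨mem_closure_hole k hk6 p hp, ?_⟩
    rw [(hole_open k).interior_eq]
    exact fun h => absurd hp (ne_of_lt h)

lemma hole_component (k : ℝ) (hk6 : 6 < |k|) (p : ℝ × ℝ × ℝ) (hp : p ∈ holeP1P1P1 k) :
    connectedComponentIn (amoebaP1P1P1 k)ᶜ p = holeP1P1P1 k := by
  have hk0 : k ≠ 0 := by
    intro h; rw [h, abs_zero] at hk6; norm_num at hk6
  have hsub_compl : holeP1P1P1 k ⊆ (amoebaP1P1P1 k)ᶜ := by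
    intro q hq hq'
    exact part1 k q.1 q.2.1 q.2.2 hq hq'
  apply subset_antisymm
  · have hCsub : connectedComponentIn (amoebaP1P1P1 k)ᶜ p ⊆ (amoebaP1P1P1 k)ᶜ :=
      connectedComponentIn_subset _ _
    have hUV : (amoebaP1P1P1 k)ᶜ ⊆ holeP1P1P1 k ∪ {q : ℝ × ℝ × ℝ | |k| < fP q} := by
      intro q hq
      rcases lt_trichotomy (fP q) |k| with h | h | h
      · exact Or.inl h
      · exact absurd (part2 k hk0 q.1 q.2.1 q.2.2 h) hq
      · exact Or.inr h
    have hVopen : IsOpen {q : ℝ × ℝ × ℝ | |k| < fP q} := isOpen_lt continuous_const fPcont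
    have hdisj : Disjoint (holeP1P1P1 k) {q : ℝ × ℝ × ℝ | |k| < fP q} := by
      rw [Set.disjoint_left]
      intro q h1 h2
      exact lt_asymm (show fP q < |k| from h1) h2
    exact isPreconnected_connectedComponentIn.subset_left_of_subset_union
      (hole_open k) hVopen hdisj (hCsub.trans hUV)
      ⟨p, mem_connectedComponentIn (hsub_compl hp), hp⟩
  · exact (hole_convex k).isPreconnected.subset_connectedComponentIn hp hsub_compl

lemma boundary_formula (k : ℝ) (p : ℝ × ℝ × ℝ)
    (hp : 2 * Real.cosh p.1 + 2 * Real.cosh p.2.1 + 2 * Real.cosh p.2.2 = |k|) :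
    ∃ ε : ℝ, (ε = 1 ∨ ε = -1) ∧
      p.1 = Real.log |(|k| / 2 - Real.cosh p.2.1 - Real.cosh p.2.2) +
        ε * Real.sqrt ((|k| / 2 - Real.cosh p.2.1 - Real.cosh p.2.2) ^ 2 - 1)| := by
  have ha : |k| / 2 - Real.cosh p.2.1 - Real.cosh p.2.2 = Real.cosh p.1 := by linarith
  have hs : Real.sqrt ((|k| / 2 - Real.cosh p.2.1 - Real.cosh p.2.2) ^ 2 - 1)
      = |Real.sinh p.1| := by
    rw [ha, show Real.cosh p.1 ^ 2 - 1 = Real.sinh p.1 ^ 2 from by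
      have := Real.cosh_sq p.1; linarith, Real.sqrt_sq_eq_abs]
  by_cases hx0 : 0 ≤ p.1
  · refine ⟨1, Or.inl rfl, ?_⟩
    rw [hs, ha, one_mul, abs_of_nonneg (Real.sinh_nonneg_iff.mpr hx0),
      Real.cosh_add_sinh, abs_of_pos (Real.exp_pos _), Real.log_exp]
  · refine ⟨-1, Or.inr rfl, ?_⟩
    rw [hs, ha, abs_of_neg (Real.sinh_neg_iff.mpr (lt_of_not_ge hx0)),
      neg_one_mul, neg_neg, Real.cosh_add_sinh, abs_of_pos (Real.exp_pos _), Real.log_exp]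

/-- For `P(u,v,w) = k - u - u⁻¹ - v - v⁻¹ - w - w⁻¹`:
(i) points with `2 cosh x + 2 cosh y + 2 cosh z < |k|` are not in the amoeba;
(ii) if `k ≠ 0`, points with `2 cosh x + 2 cosh y + 2 cosh z = |k|` are in the amoeba;
and for `|k| > 6` the set `{2 cosh x + 2 cosh y + 2 cosh z < |k|}` is a nonempty bounded
complement component (3-dimensional cavity) of the amoeba, bounded by the surfaces
`x = ln ||k|/2 − cosh y − cosh z ± √((|k|/2 − cosh y − cosh z)² − 1)|`. -/
theorem amoeba_hole_P1P1P1 (k : ℝ) :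
    (∀ x y z : ℝ, 2 * Real.cosh x + 2 * Real.cosh y + 2 * Real.cosh z < |k| →
      (x, y, z) ∉ amoebaP1P1P1 k) ∧
    (k ≠ 0 → ∀ x y z : ℝ, 2 * Real.cosh x + 2 * Real.cosh y + 2 * Real.cosh z = |k| →
      (x, y, z) ∈ amoebaP1P1P1 k) ∧
    (6 < |k| →
      (holeP1P1P1 k).Nonempty ∧
      Bornology.IsBounded (holeP1P1P1 k) ∧
      (∀ p ∈ holeP1P1P1 k, connectedComponentIn (amoebaP1P1P1 k)ᶜ p = holeP1P1P1 k) ∧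
      frontier (holeP1P1P1 k) =
        {p : ℝ × ℝ × ℝ |
          2 * Real.cosh p.1 + 2 * Real.cosh p.2.1 + 2 * Real.cosh p.2.2 = |k|} ∧
      ∀ p ∈ frontier (holeP1P1P1 k), ∃ ε : ℝ, (ε = 1 ∨ ε = -1) ∧
        p.1 = Real.log |(|k| / 2 - Real.cosh p.2.1 - Real.cosh p.2.2) +
          ε * Real.sqrt ((|k| / 2 - Real.cosh p.2.1 - Real.cosh p.2.2) ^ 2 - 1)|) := by
  refine ⟨fun x y z h => part1 k x y z h, fun hk x y z h => part2 k hk x y z h, fun hk6 => ?_⟩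
  refine ⟨⟨(0, 0, 0), ?_⟩, hole_bounded k, hole_component k hk6, ?_, ?_⟩
  · show 2 * Real.cosh 0 + 2 * Real.cosh 0 + 2 * Real.cosh 0 < |k|
    rw [Real.cosh_zero]; linarith
  · exact hole_frontier k hk6
  · intro p hp
    rw [hole_frontier k hk6] at hp
    exact boundary_formula k p hp
end

section
/- For every natural number n ≥ 1, the constant Laurent coefficient of (z + z^{-1} + w + w^{-1} + z^{-1}w^{-1})^n, namely (2π)^{-2} ∫₀^{2π} ∫₀^{2π} (e^{iθ} + e^{-iθ} + e^{iφ} + e^{-iφ} + e^{-i(θ+φ)})^n dθ dφ, equals Σ_{i} Σ_{j} C(n,i) · C(n−i, (n−j)/2) · C(i,j) · C(j, i/2), where the sum runs over integers 0 ≤ i ≤ n and 0 ≤ j ≤ i such that i is even, n − j is even, and j ≥ i/2, with the convention C(a,b) = 0 when b > a, and C denotes the binomial coefficient. -/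
open Complex Finset

noncomputable def eI (m : ℤ) (x : ℝ) : ℂ := Complex.exp (Complex.I * m * x)

lemma eI_cont (m : ℤ) : Continuous (eI m) := by
  unfold eI; fun_prop

lemma eI_mul (a b : ℤ) (x : ℝ) : eI a x * eI b x = eI (a + b) x := by
  unfold eI; rw [← Complex.exp_add]; congr 1; push_cast; ring

lemma eI_pow (a : ℤ) (j : ℕ) (x : ℝ) : eI a x ^ j = eI (j * a) x := by
  unfold eI; rw [← Complex.exp_nat_mul]; congr 1; push_cast; ring

lemma integral_eI (m : ℤ) :
    ∫ x in (0:ℝ)..(2 * Real.pi), eI m x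
      = if m = 0 then ((2 * Real.pi : ℝ) : ℂ) else 0 := by
  rcases eq_or_ne m 0 with h | h
  · simp [h, eI]
  · rw [if_neg h]
    have hc : (Complex.I * m) ≠ 0 := by
      simp [Complex.I_ne_zero, Complex.ext_iff]
      exact_mod_cast h
    have hx : ∀ x : ℝ, eI m x = Complex.exp ((Complex.I * m) * x) := by
      intro x; rw [eI, mul_assoc]
    simp only [hx]
    rw [integral_exp_mul_complex hc]
    have h2 : Complex.I * m * (2 * Real.pi : ℝ) = (m : ℤ) * (2 * Real.pi * Complex.I) := by
      push_cast; ring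
    rw [h2, Complex.exp_int_mul_two_pi_mul_I]
    simp

lemma sum_integral {α : Type*} (s : Finset α) (c : α → ℂ) (m : α → ℤ) :
    (∫ x in (0:ℝ)..(2 * Real.pi), ∑ i ∈ s, c i * eI (m i) x)
      = ∑ i ∈ s, c i * (if m i = 0 then ((2 * Real.pi : ℝ) : ℂ) else 0) := by
  rw [intervalIntegral.integral_finset_sum]
  · exact Finset.sum_congr rfl fun i _ => by
      rw [intervalIntegral.integral_const_mul, integral_eI]
  · exact fun i _ => ((continuous_const.mul (eI_cont (m i))).intervalIntegrable _ _)

abbrev I4 := (Σ _k : ℕ, Σ _r : ℕ, Σ _t : ℕ, ℕ)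

def idx (n : ℕ) : Finset I4 :=
  (range (n+1)).sigma fun k => (range (k+1)).sigma fun r =>
    (range (n-k+1)).sigma fun _t => range (k-r+1)

noncomputable def cf (n : ℕ) (x : I4) : ℂ :=
  (n.choose x.1 : ℂ) * (x.1.choose x.2.1 : ℂ) *
    ((n - x.1).choose x.2.2.1 : ℂ) * ((x.1 - x.2.1).choose x.2.2.2 : ℂ)

def pex (n : ℕ) (x : I4) : ℤ := 2 * (x.2.2.1 : ℤ) - ((n : ℤ) - x.1) - x.2.2.2
def qex (x : I4) : ℤ := 2 * (x.2.1 : ℤ) - x.1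

lemma expandE (n : ℕ) (θ φ : ℝ) :
    (Complex.exp (Complex.I * (θ : ℂ)) + Complex.exp (-(Complex.I * (θ : ℂ))) +
        Complex.exp (Complex.I * (φ : ℂ)) + Complex.exp (-(Complex.I * (φ : ℂ))) +
        Complex.exp (-(Complex.I * ((θ : ℂ) + (φ : ℂ))))) ^ n
      = ∑ x ∈ idx n, (cf n x * eI (pex n x) θ) * eI (qex x) φ := by
  have e1θ : Complex.exp (Complex.I * (θ : ℂ)) = eI 1 θ := by
    unfold eI; norm_num
  have e1φ : Complex.exp (Complex.I * (φ : ℂ)) = eI 1 φ := by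
    unfold eI; norm_num
  have emθ : Complex.exp (-(Complex.I * (θ : ℂ))) = eI (-1) θ := by
    unfold eI; congr 1; push_cast; ring
  have emφ : Complex.exp (-(Complex.I * (φ : ℂ))) = eI (-1) φ := by
    unfold eI; congr 1; push_cast; ring
  have emix : Complex.exp (-(Complex.I * ((θ : ℂ) + (φ : ℂ)))) = eI (-1) θ * eI (-1) φ := by
    unfold eI; rw [← Complex.exp_add]; congr 1; push_cast; ring
  rw [e1θ, e1φ, emθ, emφ, emix]
  have hre : eI 1 θ + eI (-1) θ + eI 1 φ + eI (-1) φ + eI (-1) θ * eI (-1) φ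
      = (eI 1 φ + eI (-1) φ * (1 + eI (-1) θ)) + (eI 1 θ + eI (-1) θ) := by ring
  rw [hre, add_pow, idx]
  simp only [Finset.sum_sigma]
  refine Finset.sum_congr rfl fun k hk => ?_
  have hkn : k ≤ n := Nat.lt_succ_iff.mp (Finset.mem_range.mp hk)
  rw [add_pow, add_pow, Finset.sum_mul_sum, Finset.sum_mul]
  refine Finset.sum_congr rfl fun r hr => ?_
  have hrk : r ≤ k := Nat.lt_succ_iff.mp (Finset.mem_range.mp hr)
  rw [Finset.sum_mul]
  refine Finset.sum_congr rfl fun t ht => ?_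
  have htn : t ≤ n - k := Nat.lt_succ_iff.mp (Finset.mem_range.mp ht)
  rw [mul_pow, add_comm (1 : ℂ) (eI (-1) θ), add_pow]
  simp only [Finset.mul_sum, Finset.sum_mul]
  refine Finset.sum_congr rfl fun u hu => ?_
  have huk : u ≤ k - r := Nat.lt_succ_iff.mp (Finset.mem_range.mp hu)
  simp only [one_pow, eI_pow, cf, pex, qex]
  have h3 : eI ((u : ℤ) * (-1)) θ * (eI ((t : ℤ) * 1) θ * eI (((n - k - t : ℕ) : ℤ) * (-1)) θ)
      = eI (2 * (t : ℤ) - ((n : ℤ) - k) - u) θ := by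
    rw [eI_mul, eI_mul]; congr 1; omega
  have h2 : eI ((r : ℤ) * 1) φ * eI (((k - r : ℕ) : ℤ) * (-1)) φ
      = eI (2 * (r : ℤ) - k) φ := by
    rw [eI_mul]; congr 1; omega
  rw [← h3, ← h2]
  ring

lemma C0 (M : ℕ) (A : ℕ → ℂ) :
    ∑ r ∈ range (M+1), (if 2*r = M then A r else 0)
      = if 2 ∣ M then A (M/2) else 0 := by
  by_cases hd : 2 ∣ M
  · obtain ⟨v, rfl⟩ := hd
    have hv : (2*v)/2 = v := by omega
    rw [if_pos ⟨v, rfl⟩, hv, Finset.sum_eq_single v]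
    · rw [if_pos rfl]
    · intro r _ hne; exact if_neg (by omega)
    · intro h; exact absurd (Finset.mem_range.mpr (by omega)) h
  · rw [if_neg hd]
    exact Finset.sum_eq_zero fun r _ => if_neg fun h => hd ⟨r, by omega⟩

lemma C1 (M V : ℕ) (β γ : ℂ) :
    ∑ t ∈ range (M+1), (if 2*t = V then β * (M.choose t : ℂ) * γ else 0)
      = if 2 ∣ V then β * (M.choose (V/2) : ℂ) * γ else 0 := by
  by_cases hd : 2 ∣ V
  · obtain ⟨v, rfl⟩ := hd
    have hv : (2*v)/2 = v := by omega
    rw [if_pos ⟨v, rfl⟩, hv]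
    by_cases hvM : v ≤ M
    · rw [Finset.sum_eq_single v]
      · rw [if_pos rfl]
      · intro t _ hne; exact if_neg (by omega)
      · intro h; exact absurd (Finset.mem_range.mpr (by omega)) h
    · rw [Finset.sum_eq_zero fun t ht => if_neg (by
        have := Finset.mem_range.mp ht; omega)]
      rw [Nat.choose_eq_zero_of_lt (by omega)]
      simp
  · rw [if_neg hd]
    exact Finset.sum_eq_zero fun t _ => if_neg fun h => hd ⟨t, by omega⟩

lemma choose_mul_choose {n k s : ℕ} (hs : s ≤ k) (hk : k ≤ n) :
    n.choose k * k.choose s = n.choose s * (n - s).choose (k - s) := by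
  have h1 : n.choose k * k.choose s * (s.factorial * (k - s).factorial * (n - k).factorial)
      = n.factorial := by
    calc n.choose k * k.choose s * (s.factorial * (k - s).factorial * (n - k).factorial)
        = n.choose k * (k.choose s * s.factorial * (k - s).factorial) * (n - k).factorial := by
          ring
      _ = n.choose k * k.factorial * (n - k).factorial := by
          rw [Nat.choose_mul_factorial_mul_factorial hs]
      _ = n.factorial := Nat.choose_mul_factorial_mul_factorial hk
  have h2 : n.choose s * (n - s).choose (k - s) *
      (s.factorial * (k - s).factorial * (n - k).factorial) = n.factorial := by
    have hks : k - s ≤ n - s := by omega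
    have hnn : n - s - (k - s) = n - k := by omega
    calc n.choose s * (n - s).choose (k - s) *
        (s.factorial * (k - s).factorial * (n - k).factorial)
        = n.choose s * s.factorial *
            ((n - s).choose (k - s) * (k - s).factorial * (n - s - (k - s)).factorial) := by
          rw [hnn]; ring
      _ = n.choose s * s.factorial * (n - s).factorial := by
          rw [Nat.choose_mul_factorial_mul_factorial hks]
      _ = n.factorial := Nat.choose_mul_factorial_mul_factorial (le_trans hs hk)
  have hpos : 0 < s.factorial * (k - s).factorial * (n - k).factorial :=
    Nat.mul_pos (Nat.mul_pos s.factorial_pos (k - s).factorial_pos) (n - k).factorial_pos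
  exact Nat.eq_of_mul_eq_mul_right hpos (h1.trans h2.symm)

lemma comb (n : ℕ) :
    ∑ x ∈ idx n, (if pex n x = 0 ∧ qex x = 0 then cf n x else 0)
      = ∑ i ∈ (Finset.range (n + 1)).filter (fun i => 2 ∣ i),
          ∑ j ∈ (Finset.range (i + 1)).filter (fun j => 2 ∣ (n - j) ∧ i / 2 ≤ j),
            (Nat.choose n i : ℂ) * (Nat.choose (n - i) ((n - j) / 2) : ℂ) *
              (Nat.choose i j : ℂ) * (Nat.choose j (i / 2) : ℂ) := by
  rw [idx, Finset.sum_filter]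
  simp only [Finset.sum_sigma, Finset.sum_filter]
  refine Finset.sum_congr rfl fun k hk => ?_
  have hkn : k ≤ n := Nat.lt_succ_iff.mp (Finset.mem_range.mp hk)
  have hcol : ∀ r ∈ range (k+1),
      (∑ t ∈ range (n-k+1), ∑ u ∈ range (k-r+1),
        if pex n ⟨k, r, t, u⟩ = 0 ∧ qex ⟨k, r, t, u⟩ = 0 then cf n ⟨k, r, t, u⟩ else 0)
      = if 2*r = k then (∑ t ∈ range (n-k+1), ∑ u ∈ range (k-r+1),
          if pex n ⟨k, r, t, u⟩ = 0 then cf n ⟨k, r, t, u⟩ else 0) else 0 := by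
    intro r _
    by_cases h : 2*r = k
    · rw [if_pos h]
      refine Finset.sum_congr rfl fun t _ => Finset.sum_congr rfl fun u _ => ?_
      have hq : qex ⟨k, r, t, u⟩ = 0 := by simp only [qex]; omega
      simp [hq]
    · rw [if_neg h]
      refine Finset.sum_eq_zero fun t _ => Finset.sum_eq_zero fun u _ => ?_
      apply if_neg
      rintro ⟨-, hq⟩
      simp only [qex] at hq
      omega
  rw [Finset.sum_congr rfl hcol, C0]
  by_cases hk2 : 2 ∣ k
  · obtain ⟨v, hv⟩ := id hk2
    rw [if_pos hk2, if_pos hk2, Finset.sum_comm]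
    have hstep : ∀ u ∈ range (k - k/2 + 1),
        (∑ t ∈ range (n-k+1),
          if pex n ⟨k, k/2, t, u⟩ = 0 then cf n ⟨k, k/2, t, u⟩ else 0)
        = if 2 ∣ (n - k + u) then
            ((n.choose k : ℂ) * (k.choose (k/2) : ℂ) *
              ((n-k).choose ((n-k+u)/2) : ℂ) * ((k - k/2).choose u : ℂ)) else 0 := by
      intro u _
      rw [← C1 (n-k) (n-k+u) ((n.choose k : ℂ) * (k.choose (k/2) : ℂ))
        ((k - k/2).choose u : ℂ)]
      refine Finset.sum_congr rfl fun t _ => ?_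
      have hiff : (pex n ⟨k, k/2, t, u⟩ = 0) ↔ (2*t = n - k + u) := by
        simp only [pex]; omega
      rw [if_congr hiff rfl rfl]
      rfl
    rw [Finset.sum_congr rfl hstep, show k - k/2 = k/2 from by omega]
    have hrefl := (Finset.sum_range_reflect (fun j =>
        if 2 ∣ (n - j) ∧ k / 2 ≤ j then
          (Nat.choose n k : ℂ) * (Nat.choose (n - k) ((n - j) / 2) : ℂ) *
            (Nat.choose k j : ℂ) * (Nat.choose j (k / 2) : ℂ) else 0) (k+1)).symm
    simp only [Nat.add_sub_cancel] at hrefl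
    rw [hrefl]
    rw [← Finset.sum_subset (Finset.range_subset_range.mpr (by omega : k/2 + 1 ≤ k + 1))
      (fun u hu1 hu2 => by
        apply if_neg
        rintro ⟨-, hc⟩
        have h1 := Finset.mem_range.mp hu1
        have h2 := Finset.mem_range.not.mp hu2
        omega)]
    refine Finset.sum_congr rfl fun u hu => ?_
    have huk : u ≤ k/2 := Nat.lt_succ_iff.mp (Finset.mem_range.mp hu)
    have e1 : n - (k - u) = n - k + u := by omega
    have h2 : k/2 ≤ k - u := by omega
    have hcond : (2 ∣ (n - k + u)) ↔ (2 ∣ (n - (k - u)) ∧ k / 2 ≤ (k - u)) := by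
      rw [e1]; exact (and_iff_left h2).symm
    have hnat : k.choose (k-u) * (k-u).choose (k/2) = k.choose (k/2) * (k/2).choose u := by
      rw [choose_mul_choose h2 (by omega)]
      rw [show k - k/2 = k/2 from by omega, show k - u - k/2 = k/2 - u from by omega,
        Nat.choose_symm huk]
    have hC : (k.choose (k/2) : ℂ) * ((k/2).choose u : ℂ)
        = (k.choose (k-u) : ℂ) * ((k-u).choose (k/2) : ℂ) := by
      exact_mod_cast congrArg (Nat.cast (R := ℂ)) hnat.symm
    have hval : (n.choose k : ℂ) * (k.choose (k/2) : ℂ) *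
          ((n-k).choose ((n-k+u)/2) : ℂ) * ((k/2).choose u : ℂ)
        = (Nat.choose n k : ℂ) * (Nat.choose (n - k) ((n - (k - u)) / 2) : ℂ) *
            (Nat.choose k (k - u) : ℂ) * (Nat.choose (k - u) (k / 2) : ℂ) := by
      rw [e1]
      linear_combination ((n.choose k : ℂ) * ((n-k).choose ((n-k+u)/2) : ℂ)) * hC
    exact if_congr hcond hval rfl
  · rw [if_neg hk2, if_neg hk2]

/-- The constant Laurent coefficient of `(z + z⁻¹ + w + w⁻¹ + z⁻¹w⁻¹)ⁿ`, computed as a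
torus average, equals `∑_{i,j} C(n,i) C(n−i,(n−j)/2) C(i,j) C(j,i/2)`, the sum running
over `0 ≤ i ≤ n`, `0 ≤ j ≤ i` with `i` even, `n − j` even and `j ≥ i/2`
(`C(a,b) = 0` when `b > a`). -/
theorem constant_term_dP2 (n : ℕ) (hn : 1 ≤ n) :
    ((1 : ℂ) / (2 * Real.pi) ^ 2) *
        (∫ θ in (0 : ℝ)..(2 * Real.pi), ∫ φ in (0 : ℝ)..(2 * Real.pi),
          (Complex.exp (Complex.I * (θ : ℂ)) + Complex.exp (-(Complex.I * (θ : ℂ))) +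
            Complex.exp (Complex.I * (φ : ℂ)) + Complex.exp (-(Complex.I * (φ : ℂ))) +
            Complex.exp (-(Complex.I * ((θ : ℂ) + (φ : ℂ))))) ^ n)
      = ∑ i ∈ (Finset.range (n + 1)).filter (fun i => 2 ∣ i),
          ∑ j ∈ (Finset.range (i + 1)).filter (fun j => 2 ∣ (n - j) ∧ i / 2 ≤ j),
            (Nat.choose n i : ℂ) * (Nat.choose (n - i) ((n - j) / 2) : ℂ) *
              (Nat.choose i j : ℂ) * (Nat.choose j (i / 2) : ℂ) := by
  simp only [expandE]
  rw [intervalIntegral.integral_congr (g := fun θ => ∑ x ∈ idx n,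
      ((cf n x * (if qex x = 0 then ((2 * Real.pi : ℝ) : ℂ) else 0)) * eI (pex n x) θ))
      (fun θ _ => by
        simp only
        rw [sum_integral]
        exact Finset.sum_congr rfl fun x _ => by ring)]
  rw [sum_integral, ← comb n, Finset.mul_sum]
  refine Finset.sum_congr rfl fun x _ => ?_
  have hπ : (Real.pi : ℂ) ≠ 0 := by exact_mod_cast Real.pi_ne_zero
  by_cases hq : qex x = 0
  · by_cases hp : pex n x = 0
    · rw [if_pos hq, if_pos hp, if_pos ⟨hp, hq⟩]
      have h2π : ((2 * Real.pi : ℝ) : ℂ) = 2 * (Real.pi : ℂ) := by push_cast; ring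
      rw [h2π]
      field_simp
    · simp [hp, hq]
  · simp [hq]
end

section
/- For every natural number n ≥ 1, the constant Laurent coefficient of (z + z^{-1} + w + w^{-1} + z w^{-1} + z^{-1} w)^n, namely (2π)^{-2} ∫₀^{2π} ∫₀^{2π} (e^{iθ} + e^{-iθ} + e^{iφ} + e^{-iφ} + e^{i(θ−φ)} + e^{-i(θ−φ)})^n dθ dφ, equals Σ_{i} Σ_{l} Σ_{j} C(n,i) · C(i,l) · C(l, (l+n−i−2j)/2) · C(i−l, (2i+2j−l−n)/2) · C(n−i, j), where the sum runs over integers 0 ≤ i ≤ n, 0 ≤ l ≤ i, 0 ≤ j ≤ n−i such that i is even, l + n is even, and n − i − 2j ≤ l ≤ n − 2j, with the convention C(a,b) = 0 when b > a or when b is negative, and C denotes the binomial coefficient. -/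
/-- Binomial coefficient `C(a, b)` with an integer lower argument, with the convention
that `C(a, b) = 0` when `b` is negative (and, via `Nat.choose`, when `b > a`). -/
def intChoose (a : ℕ) (b : ℤ) : ℕ :=
  if 0 ≤ b then Nat.choose a b.toNat else 0

open Finset Complex

def Kc (n i l a b j : ℕ) : ℂ :=
  ((n.choose i * i.choose l * l.choose a * (i-l).choose b * (n-i).choose j : ℕ) : ℂ)

def PP (i l a b : ℕ) : ℤ := ((a+b : ℕ) : ℤ) - (((l-a)+(i-l-b) : ℕ) : ℤ)
def QQ (n i l b j : ℕ) : ℤ := (((i-l-b)+(n-i-j) : ℕ) : ℤ) - ((b+j : ℕ) : ℤ)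

noncomputable def tm (n i l a b j : ℕ) (θ φ : ℝ) : ℂ :=
  Complex.exp (Complex.I * ((QQ n i l b j : ℤ) : ℂ) * (φ:ℂ)) *
    (Kc n i l a b j * Complex.exp (Complex.I * ((PP i l a b : ℤ) : ℂ) * (θ:ℂ)))

lemma pow_exp (t : ℂ) (p q : ℕ) :
    Complex.exp (Complex.I * t)^p * ((Complex.exp (Complex.I * t))⁻¹)^q
      = Complex.exp (Complex.I * (((p:ℤ) - (q:ℤ) : ℤ) : ℂ) * t) := by
  rw [← Complex.exp_neg, ← Complex.exp_nat_mul, ← Complex.exp_nat_mul, ← Complex.exp_add]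
  congr 1
  push_cast
  ring

lemma expand (n : ℕ) (x y : ℂ) :
    (x + x⁻¹ + y + y⁻¹ + x*y⁻¹ + x⁻¹*y)^n =
    ∑ i ∈ range (n+1), ∑ j ∈ range (n-i+1), ∑ l ∈ range (i+1),
      ∑ b ∈ range (i-l+1), ∑ a ∈ range (l+1),
        Kc n i l a b j *
          ((x^(a+b) * (x⁻¹)^((l-a)+(i-l-b))) * (y^((i-l-b)+(n-i-j)) * (y⁻¹)^(b+j))) := by
  have h : (x + x⁻¹ + y + y⁻¹ + x*y⁻¹ + x⁻¹*y)
      = ((x+x⁻¹) + (x*y⁻¹ + x⁻¹*y)) + (y⁻¹ + y) := by ring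
  rw [h]
  simp only [add_pow, Finset.sum_mul, Finset.mul_sum]
  refine Finset.sum_congr rfl fun i _ => Finset.sum_congr rfl fun j _ =>
    Finset.sum_congr rfl fun l _ => Finset.sum_congr rfl fun b _ =>
    Finset.sum_congr rfl fun a _ => ?_
  simp only [Kc]
  push_cast
  ring

lemma key (n : ℕ) (θ φ : ℝ) :
    (Complex.exp (Complex.I * (θ : ℂ)) + Complex.exp (-(Complex.I * (θ : ℂ))) +
      Complex.exp (Complex.I * (φ : ℂ)) + Complex.exp (-(Complex.I * (φ : ℂ))) +
      Complex.exp (Complex.I * ((θ : ℂ) - (φ : ℂ))) +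
      Complex.exp (-(Complex.I * ((θ : ℂ) - (φ : ℂ))))) ^ n
    = ∑ i ∈ range (n+1), ∑ j ∈ range (n-i+1), ∑ l ∈ range (i+1),
        ∑ b ∈ range (i-l+1), ∑ a ∈ range (l+1), tm n i l a b j θ φ := by
  have e1 : Complex.exp (-(Complex.I * (θ:ℂ))) = (Complex.exp (Complex.I * (θ:ℂ)))⁻¹ :=
    Complex.exp_neg _
  have e2 : Complex.exp (-(Complex.I * (φ:ℂ))) = (Complex.exp (Complex.I * (φ:ℂ)))⁻¹ :=
    Complex.exp_neg _
  have e3 : Complex.exp (Complex.I * ((θ:ℂ) - (φ:ℂ)))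
      = Complex.exp (Complex.I * (θ:ℂ)) * (Complex.exp (Complex.I * (φ:ℂ)))⁻¹ := by
    rw [mul_sub, Complex.exp_sub, div_eq_mul_inv]
  have e4 : Complex.exp (-(Complex.I * ((θ:ℂ) - (φ:ℂ))))
      = (Complex.exp (Complex.I * (θ:ℂ)))⁻¹ * Complex.exp (Complex.I * (φ:ℂ)) := by
    rw [Complex.exp_neg, e3, mul_inv, inv_inv]
  rw [e1, e2, e3, e4, expand]
  refine Finset.sum_congr rfl fun i _ => Finset.sum_congr rfl fun j _ =>
    Finset.sum_congr rfl fun l _ => Finset.sum_congr rfl fun b _ =>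
    Finset.sum_congr rfl fun a _ => ?_
  rw [tm, pow_exp, pow_exp, PP, QQ]
  ring

noncomputable def tm2 (n i l a b j : ℕ) (θ : ℝ) : ℂ :=
  ((if QQ n i l b j = 0 then ((2*Real.pi : ℝ) : ℂ) else 0) * Kc n i l a b j) *
    Complex.exp (Complex.I * ((PP i l a b : ℤ) : ℂ) * (θ:ℂ))

lemma cont4 (n : ℕ) (θ : ℝ) (i j : ℕ) :
    Continuous (fun φ : ℝ => ∑ l ∈ range (i+1), ∑ b ∈ range (i-l+1),
      ∑ a ∈ range (l+1), tm n i l a b j θ φ) := by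
  unfold tm; fun_prop

lemma cont5 (n : ℕ) (θ : ℝ) (i : ℕ) :
    Continuous (fun φ : ℝ => ∑ j ∈ range (n-i+1), ∑ l ∈ range (i+1),
      ∑ b ∈ range (i-l+1), ∑ a ∈ range (l+1), tm n i l a b j θ φ) := by
  unfold tm; fun_prop

lemma cont3 (n : ℕ) (θ : ℝ) (i j l : ℕ) :
    Continuous (fun φ : ℝ => ∑ b ∈ range (i-l+1), ∑ a ∈ range (l+1), tm n i l a b j θ φ) := by
  unfold tm; fun_prop

lemma cont2 (n : ℕ) (θ : ℝ) (i j l b : ℕ) :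
    Continuous (fun φ : ℝ => ∑ a ∈ range (l+1), tm n i l a b j θ φ) := by
  unfold tm; fun_prop

lemma cont1 (n : ℕ) (θ : ℝ) (i j l b a : ℕ) :
    Continuous (fun φ : ℝ => tm n i l a b j θ φ) := by
  unfold tm; fun_prop

lemma integral_exp_I (k : ℤ) :
    ∫ t in (0:ℝ)..(2*Real.pi), Complex.exp (Complex.I * ((k:ℤ):ℂ) * (t:ℂ)) =
      if k = 0 then ((2*Real.pi : ℝ) : ℂ) else 0 := by
  split_ifs with h
  · subst h
    simp
  · have hc : Complex.I * ((k:ℤ):ℂ) ≠ 0 := by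
      simp [Complex.I_ne_zero, h]
    rw [integral_exp_mul_complex hc]
    have h1 : Complex.I * ((k:ℤ):ℂ) * ((2*Real.pi : ℝ):ℂ) = (k:ℤ) * (2*(Real.pi:ℂ)*Complex.I) := by
      push_cast; ring
    have h2 : Complex.I * ((k:ℤ):ℂ) * ((0:ℝ):ℂ) = 0 := by
      push_cast; ring
    rw [h1, h2, Complex.exp_int_mul_two_pi_mul_I, Complex.exp_zero]
    simp

lemma h1 (n : ℕ) (θ : ℝ) :
    (∫ φ in (0:ℝ)..(2*Real.pi), ∑ i ∈ range (n+1), ∑ j ∈ range (n-i+1), ∑ l ∈ range (i+1),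
        ∑ b ∈ range (i-l+1), ∑ a ∈ range (l+1), tm n i l a b j θ φ)
    = ∑ i ∈ range (n+1), ∑ j ∈ range (n-i+1), ∑ l ∈ range (i+1),
        ∑ b ∈ range (i-l+1), ∑ a ∈ range (l+1), tm2 n i l a b j θ := by
  rw [intervalIntegral.integral_finset_sum fun i _ => (cont5 n θ i).intervalIntegrable _ _]
  refine Finset.sum_congr rfl fun i _ => ?_
  rw [intervalIntegral.integral_finset_sum fun j _ => (cont4 n θ i j).intervalIntegrable _ _]
  refine Finset.sum_congr rfl fun j _ => ?_
  rw [intervalIntegral.integral_finset_sum fun l _ => (cont3 n θ i j l).intervalIntegrable _ _]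
  refine Finset.sum_congr rfl fun l _ => ?_
  rw [intervalIntegral.integral_finset_sum fun b _ => (cont2 n θ i j l b).intervalIntegrable _ _]
  refine Finset.sum_congr rfl fun b _ => ?_
  rw [intervalIntegral.integral_finset_sum fun a _ => (cont1 n θ i j l b a).intervalIntegrable _ _]
  refine Finset.sum_congr rfl fun a _ => ?_
  simp only [tm, tm2]
  rw [intervalIntegral.integral_mul_const, integral_exp_I]
  ring

lemma cont2_4 (n : ℕ) (i : ℕ) :
    Continuous (fun θ : ℝ => ∑ j ∈ range (n-i+1), ∑ l ∈ range (i+1),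
      ∑ b ∈ range (i-l+1), ∑ a ∈ range (l+1), tm2 n i l a b j θ) := by
  unfold tm2; fun_prop

lemma cont2_3 (n : ℕ) (i j : ℕ) :
    Continuous (fun θ : ℝ => ∑ l ∈ range (i+1),
      ∑ b ∈ range (i-l+1), ∑ a ∈ range (l+1), tm2 n i l a b j θ) := by
  unfold tm2; fun_prop

lemma cont2_2 (n : ℕ) (i j l : ℕ) :
    Continuous (fun θ : ℝ => ∑ b ∈ range (i-l+1), ∑ a ∈ range (l+1), tm2 n i l a b j θ) := by
  unfold tm2; fun_prop

lemma cont2_1 (n : ℕ) (i j l b : ℕ) :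
    Continuous (fun θ : ℝ => ∑ a ∈ range (l+1), tm2 n i l a b j θ) := by
  unfold tm2; fun_prop

lemma cont2_0 (n : ℕ) (i j l b a : ℕ) :
    Continuous (fun θ : ℝ => tm2 n i l a b j θ) := by
  unfold tm2; fun_prop

noncomputable def vl (n i l a b j : ℕ) : ℂ :=
  ((if QQ n i l b j = 0 then ((2*Real.pi : ℝ) : ℂ) else 0) * Kc n i l a b j) *
    (if PP i l a b = 0 then ((2*Real.pi:ℝ):ℂ) else 0)

lemma h2 (n : ℕ) :
    (∫ θ in (0:ℝ)..(2*Real.pi), ∑ i ∈ range (n+1), ∑ j ∈ range (n-i+1), ∑ l ∈ range (i+1),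
        ∑ b ∈ range (i-l+1), ∑ a ∈ range (l+1), tm2 n i l a b j θ)
    = ∑ i ∈ range (n+1), ∑ j ∈ range (n-i+1), ∑ l ∈ range (i+1),
        ∑ b ∈ range (i-l+1), ∑ a ∈ range (l+1), vl n i l a b j := by
  rw [intervalIntegral.integral_finset_sum fun i _ => (cont2_4 n i).intervalIntegrable _ _]
  refine Finset.sum_congr rfl fun i _ => ?_
  rw [intervalIntegral.integral_finset_sum fun j _ => (cont2_3 n i j).intervalIntegrable _ _]
  refine Finset.sum_congr rfl fun j _ => ?_
  rw [intervalIntegral.integral_finset_sum fun l _ => (cont2_2 n i j l).intervalIntegrable _ _]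
  refine Finset.sum_congr rfl fun l _ => ?_
  rw [intervalIntegral.integral_finset_sum fun b _ => (cont2_1 n i j l b).intervalIntegrable _ _]
  refine Finset.sum_congr rfl fun b _ => ?_
  rw [intervalIntegral.integral_finset_sum fun a _ => (cont2_0 n i j l b a).intervalIntegrable _ _]
  refine Finset.sum_congr rfl fun a _ => ?_
  simp only [tm2, vl]
  rw [intervalIntegral.integral_const_mul, integral_exp_I]

lemma intChoose_neg (a : ℕ) {b : ℤ} (h : b < 0) : intChoose a b = 0 := by
  simp [intChoose, not_le.mpr h]

lemma intChoose_gt (a : ℕ) {b : ℤ} (h : (a:ℤ) < b) : intChoose a b = 0 := by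
  rw [intChoose, if_pos (by omega)]
  exact Nat.choose_eq_zero_of_lt (by omega)

lemma comb_s19 (n i l j : ℕ) (hli : l ≤ i) (hin : i ≤ n) (hj : j ≤ n - i) :
    (∑ b ∈ range (i-l+1), ∑ a ∈ range (l+1),
      if 2*(a+b) = i ∧ 2*(b+j) + l = n then ((l.choose a : ℂ) * ((i-l).choose b : ℂ)) else 0)
    = if (2 ∣ i ∧ 2 ∣ (l+n) ∧ ((n:ℤ) - (i:ℤ) - 2*(j:ℤ) ≤ (l:ℤ) ∧ (l:ℤ) ≤ (n:ℤ) - 2*(j:ℤ))) then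
        ((intChoose l (((l:ℤ) + n - i - 2*j)/2) : ℂ) *
          (intChoose (i-l) ((2*(i:ℤ) + 2*j - l - n)/2) : ℂ)) else 0 := by
  by_cases hex : ∃ a₀ b₀ : ℕ, a₀ ≤ l ∧ b₀ ≤ i - l ∧ 2*(a₀+b₀) = i ∧ 2*(b₀+j) + l = n
  · obtain ⟨a₀, b₀, ha₀, hb₀, hab, hbj⟩ := hex
    have hiff : ∀ a b : ℕ, (2*(a+b) = i ∧ 2*(b+j) + l = n) ↔ (a = a₀ ∧ b = b₀) := by
      intro a b; omega
    have m1 : a₀ < l + 1 := by omega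
    have m2 : b₀ < i - l + 1 := by omega
    simp only [hiff, ite_and, Finset.sum_ite_eq', Finset.mem_range, m1, m2, if_true]
    rw [if_pos (by omega)]
    have e1 : ((l:ℤ) + n - i - 2*j)/2 = ((l - a₀ : ℕ) : ℤ) := by omega
    have e2 : (2*(i:ℤ) + 2*j - l - n)/2 = ((i - l - b₀ : ℕ) : ℤ) := by omega
    rw [e1, e2]
    simp only [intChoose, if_pos (Int.ofNat_nonneg _), Int.toNat_natCast]
    rw [Nat.choose_symm ha₀, Nat.choose_symm hb₀,
      if_pos (show 2 ∣ l + n by omega),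
      if_pos (show (n:ℤ) - (i:ℤ) - 2*(j:ℤ) ≤ (l:ℤ) by omega),
      if_pos (show (l:ℤ) ≤ (n:ℤ) - 2*(j:ℤ) by omega)]
  · have hz : ∀ b ∈ range (i-l+1), ∀ a ∈ range (l+1),
        (if 2*(a+b) = i ∧ 2*(b+j) + l = n then ((l.choose a : ℂ) * ((i-l).choose b : ℂ)) else 0) = 0 := by
      intro b hb a ha
      rw [Finset.mem_range] at ha hb
      rw [if_neg]
      intro ⟨hc1, hc2⟩
      exact hex ⟨a, b, by omega, by omega, hc1, hc2⟩
    rw [Finset.sum_congr rfl fun b hb => Finset.sum_congr rfl fun a ha => hz b hb a ha]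
    simp only [Finset.sum_const_zero]
    by_cases hcond : (2 ∣ i ∧ 2 ∣ (l+n) ∧ ((n:ℤ) - (i:ℤ) - 2*(j:ℤ) ≤ (l:ℤ) ∧ (l:ℤ) ≤ (n:ℤ) - 2*(j:ℤ)))
    · rw [if_pos hcond]
      obtain ⟨h2i, h2ln, hge, hle⟩ := hcond
      obtain ⟨b₀, hb₀⟩ : ∃ b₀ : ℕ, 2*(b₀+j) + l = n := ⟨(n - l)/2 - j, by omega⟩
      by_cases hbr : b₀ ≤ i - l
      · by_cases hbig : 2*b₀ ≤ i ∧ i ≤ 2*l + 2*b₀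
        · exact absurd ⟨i/2 - b₀, b₀, by omega, hbr, by omega, hb₀⟩ hex
        · rcases not_and_or.mp hbig with h | h
          · have : intChoose l (((l:ℤ) + n - i - 2*j)/2) = 0 :=
              intChoose_gt l (by omega)
            simp [this]
          · have : intChoose l (((l:ℤ) + n - i - 2*j)/2) = 0 :=
              intChoose_neg l (by omega)
            simp [this]
      · have : intChoose (i-l) ((2*(i:ℤ) + 2*j - l - n)/2) = 0 :=
          intChoose_neg (i-l) (by omega)
        simp [this]
    · rw [if_neg hcond]

lemma stepB (n i l a b j : ℕ) (hin : i ≤ n) (hli : l ≤ i) (hjn : j ≤ n-i) (hal : a ≤ l) (hbl : b ≤ i-l) :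
    ((1 : ℂ) / (2 * Real.pi) ^ 2) * vl n i l a b j
      = ((n.choose i : ℂ) * (i.choose l : ℂ) * ((n-i).choose j : ℂ)) *
          (if 2*(a+b) = i ∧ 2*(b+j) + l = n then ((l.choose a : ℂ) * ((i-l).choose b : ℂ)) else 0) := by
  have hiff : (2*(a+b) = i ∧ 2*(b+j) + l = n) ↔ (QQ n i l b j = 0 ∧ PP i l a b = 0) := by
    simp only [PP, QQ]; omega
  have hπ : (Real.pi : ℂ) ≠ 0 := by
    simp [Real.pi_ne_zero]
  by_cases hc : 2*(a+b) = i ∧ 2*(b+j) + l = n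
  · rw [if_pos hc]
    obtain ⟨hQ, hP⟩ := hiff.mp hc
    simp only [vl, hQ, hP, if_pos rfl]
    simp only [Kc]
    push_cast
    field_simp
  · rw [if_neg hc]
    have hn := (not_iff_not.mpr hiff).mp hc
    rcases not_and_or.mp hn with h | h <;> simp [vl, h]


/-- The constant Laurent coefficient of `(z + z⁻¹ + w + w⁻¹ + z w⁻¹ + z⁻¹ w)ⁿ`, computed
as a torus average, equals
`∑_{i,l,j} C(n,i) C(i,l) C(l,(l+n−i−2j)/2) C(i−l,(2i+2j−l−n)/2) C(n−i,j)`, the sum running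
over `0 ≤ i ≤ n`, `0 ≤ l ≤ i`, `0 ≤ j ≤ n−i` with `i` even, `l + n` even and
`n − i − 2j ≤ l ≤ n − 2j` (with `C(a,b) = 0` when `b > a` or `b < 0`). -/
theorem constant_term_dP3 (n : ℕ) (hn : 1 ≤ n) :
    ((1 : ℂ) / (2 * Real.pi) ^ 2) *
        (∫ θ in (0 : ℝ)..(2 * Real.pi), ∫ φ in (0 : ℝ)..(2 * Real.pi),
          (Complex.exp (Complex.I * (θ : ℂ)) + Complex.exp (-(Complex.I * (θ : ℂ))) +
            Complex.exp (Complex.I * (φ : ℂ)) + Complex.exp (-(Complex.I * (φ : ℂ))) +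
            Complex.exp (Complex.I * ((θ : ℂ) - (φ : ℂ))) +
            Complex.exp (-(Complex.I * ((θ : ℂ) - (φ : ℂ))))) ^ n)
      = ∑ i ∈ (Finset.range (n + 1)).filter (fun i => 2 ∣ i),
          ∑ l ∈ (Finset.range (i + 1)).filter (fun l => 2 ∣ (l + n)),
            ∑ j ∈ (Finset.range (n - i + 1)).filter
                (fun j : ℕ =>
                  (n : ℤ) - (i : ℤ) - 2 * (j : ℤ) ≤ (l : ℤ) ∧
                    (l : ℤ) ≤ (n : ℤ) - 2 * (j : ℤ)),
              (Nat.choose n i : ℂ) * (Nat.choose i l : ℂ) *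
                (intChoose l (((l : ℤ) + n - i - 2 * j) / 2) : ℂ) *
                (intChoose (i - l) ((2 * (i : ℤ) + 2 * j - l - n) / 2) : ℂ) *
                (Nat.choose (n - i) j : ℂ) := by
  simp only [key]
  simp only [h1]
  rw [h2]
  trans (∑ i ∈ range (n+1), ∑ l ∈ range (i+1), ∑ j ∈ range (n-i+1),
      ((n.choose i : ℂ) * (i.choose l : ℂ) * ((n-i).choose j : ℂ)) *
        (if (2 ∣ i ∧ 2 ∣ (l+n) ∧ ((n:ℤ) - (i:ℤ) - 2*(j:ℤ) ≤ (l:ℤ) ∧ (l:ℤ) ≤ (n:ℤ) - 2*(j:ℤ))) then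
          ((intChoose l (((l:ℤ) + n - i - 2*j)/2) : ℂ) *
            (intChoose (i-l) ((2*(i:ℤ) + 2*j - l - n)/2) : ℂ)) else 0))
  · simp only [Finset.mul_sum]
    refine Finset.sum_congr rfl fun i hi => ?_
    rw [Finset.mem_range] at hi
    rw [Finset.sum_comm]
    refine Finset.sum_congr rfl fun l hl => ?_
    rw [Finset.mem_range] at hl
    refine Finset.sum_congr rfl fun j hj => ?_
    rw [Finset.mem_range] at hj
    rw [show (∑ b ∈ range (i-l+1), ∑ a ∈ range (l+1), (1 : ℂ) / (2 * Real.pi) ^ 2 * vl n i l a b j)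
        = ∑ b ∈ range (i-l+1), ∑ a ∈ range (l+1),
            ((n.choose i : ℂ) * (i.choose l : ℂ) * ((n-i).choose j : ℂ)) *
              (if 2*(a+b) = i ∧ 2*(b+j) + l = n then ((l.choose a : ℂ) * ((i-l).choose b : ℂ)) else 0)
      from Finset.sum_congr rfl fun b hb => Finset.sum_congr rfl fun a ha =>
        stepB n i l a b j (by omega) (by omega) (by omega)
          (by rw [Finset.mem_range] at ha; omega) (by rw [Finset.mem_range] at hb; omega)]
    simp only [← Finset.mul_sum]
    rw [comb_s19 n i l j (by omega) (by omega) (by omega)]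
  · -- E = RHS with filters
    simp only [Finset.sum_filter]
    refine Finset.sum_congr rfl fun i _ => ?_
    by_cases hpi : 2 ∣ i
    · rw [if_pos hpi]
      refine Finset.sum_congr rfl fun l _ => ?_
      by_cases hpl : 2 ∣ (l + n)
      · rw [if_pos hpl]
        refine Finset.sum_congr rfl fun j _ => ?_
        by_cases hpj : ((n:ℤ) - (i:ℤ) - 2*(j:ℤ) ≤ (l:ℤ) ∧ (l:ℤ) ≤ (n:ℤ) - 2*(j:ℤ))
        · rw [if_pos ⟨hpi, hpl, hpj⟩, if_pos hpj]
          ring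
        · rw [if_neg (by tauto), if_neg hpj]
          exact mul_zero _
      · rw [if_neg hpl]
        refine Finset.sum_eq_zero fun j _ => ?_
        rw [if_neg (by tauto)]
        exact mul_zero _
    · rw [if_neg hpi]
      refine Finset.sum_eq_zero fun l _ => Finset.sum_eq_zero fun j _ => ?_
      rw [if_neg (by tauto)]
      exact mul_zero _
end
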